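/- For all natural numbers p ≥ 1, r ≥ 1 and q ≥ 0, the intersection matrix of the star-shaped weighted tree Λ_{p,q,r} — which has a central vertex of weight −2 and three legs attached to it: a leg consisting of a single vertex of weight −(p+2); a leg consisting of a single vertex of weight −(r+3); and a leg which is a path whose vertices, listed in order starting from the one adjacent to the central vertex, have weights −2 (repeated q times), −3, −2 (repeated r−1 times), −3, −2 (repeated p−1 times), −(q+4) — is negative definite. -/

import Mathlib

/-- The vertex type of a star-shaped tree with `m` legs, leg `i` consisting of a path of
`n i` vertices.  `none` is the central vertex; `some ⟨i, j⟩` is the `j`-th vertex of the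
`i`-th leg (the vertex `j = 0` being the one joined to the central vertex by an edge). -/
abbrev StarVertex (m : ℕ) (n : Fin m → ℕ) : Type := Option ((i : Fin m) × Fin (n i))

/-- The intersection matrix of the star-shaped weighted tree with `m` legs, where the central
vertex has weight `w0` and the `j`-th vertex of the `i`-th leg has weight `w i j`:  diagonal
entries are the weights, off-diagonal entries are `1` for vertices joined by an edge
(consecutive vertices of a leg, or the central vertex and the initial vertex of a leg)
and `0` otherwise. -/
def starMatrix (m : ℕ) (n : Fin m → ℕ) (w0 : ℤ) (w : Fin m → ℕ → ℤ) :
    Matrix (StarVertex m n) (StarVertex m n) ℤ :=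
  Matrix.of fun v v' =>
    match v, v' with
    | none, none => w0
    | none, some ⟨_, j⟩ => if (j : ℕ) = 0 then 1 else 0
    | some ⟨_, j⟩, none => if (j : ℕ) = 0 then 1 else 0
    | some ⟨i, j⟩, some ⟨i', j'⟩ =>
        if (i : ℕ) = (i' : ℕ) then
          if (j : ℕ) = (j' : ℕ) then w i (j : ℕ)
          else if (j : ℕ) + 1 = (j' : ℕ) ∨ (j' : ℕ) + 1 = (j : ℕ) then 1 else 0
        else 0

/-- The weights along a leg consisting of a chain of `k` vertices of weight `-2` followed by a
terminal vertex of weight `-a` (a path of `k + 1` vertices). -/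
def chainW (k : ℕ) (a : ℤ) (j : ℕ) : ℤ := if j < k then -2 else -a

/- ---------------------------------------------------------------------------------------
Auxiliary material for the proof.
--------------------------------------------------------------------------------------- -/

open Finset

/-- A symmetric real matrix with nonnegative off-diagonal entries admitting a positive
vector `z` with all row sums `(Qz)_v` negative is negative definite. -/
lemma neg_def_of_pos_vector {V : Type*} [Fintype V] (Q : V → V → ℝ)
    (hsym : ∀ v w, Q v w = Q w v)
    (hoff : ∀ v w, v ≠ w → 0 ≤ Q v w)
    (z : V → ℝ) (hz : ∀ v, 0 < z v)
    (hQz : ∀ v, ∑ w, Q v w * z w < 0)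
    (x : V → ℝ) (hx : x ≠ 0) :
    ∑ v, ∑ w, Q v w * x v * x w < 0 := by
  have key : ∀ v w, Q v w * x v * x w ≤
      (x v ^ 2 / z v) * (Q v w * z w) / 2 + (x w ^ 2 / z w) * (Q v w * z v) / 2 := by
    intro v w
    rcases eq_or_ne v w with rfl | hne
    · have e : x v ^ 2 / z v * (Q v v * z v) / 2 + x v ^ 2 / z v * (Q v v * z v) / 2
          = Q v v * x v * x v := by
        have hzv := (hz v).ne'
        field_simp
        ring
      exact le_of_eq e.symm
    · have h1 : 0 ≤ Q v w := hoff v w hne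
      have hzv := hz v
      have hzw := hz w
      have h2 : x v * x w * (z v * z w) ≤
          ((x v ^ 2 / z v) * z w / 2 + (x w ^ 2 / z w) * z v / 2) * (z v * z w) := by
        have e1 : (x v ^ 2 / z v) * z w / 2 * (z v * z w) = x v ^ 2 * z w ^ 2 / 2 := by
          field_simp
        have e2 : (x w ^ 2 / z w) * z v / 2 * (z v * z w) = x w ^ 2 * z v ^ 2 / 2 := by
          field_simp
        rw [add_mul, e1, e2]
        nlinarith [sq_nonneg (x v * z w - x w * z v)]
      have h3 : x v * x w ≤ (x v ^ 2 / z v) * z w / 2 + (x w ^ 2 / z w) * z v / 2 :=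
        le_of_mul_le_mul_right (by linarith [h2]) (mul_pos hzv hzw)
      calc Q v w * x v * x w = Q v w * (x v * x w) := by ring
        _ ≤ Q v w * ((x v ^ 2 / z v) * z w / 2 + (x w ^ 2 / z w) * z v / 2) :=
            mul_le_mul_of_nonneg_left h3 h1
        _ = (x v ^ 2 / z v) * (Q v w * z w) / 2 + (x w ^ 2 / z w) * (Q v w * z v) / 2 := by ring
  have step1 : ∑ v, ∑ w, Q v w * x v * x w ≤
      ∑ v, (x v ^ 2 / z v) * (∑ w, Q v w * z w) := by
    calc ∑ v, ∑ w, Q v w * x v * x w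
        ≤ ∑ v, ∑ w, ((x v ^ 2 / z v) * (Q v w * z w) / 2 + (x w ^ 2 / z w) * (Q v w * z v) / 2) :=
          Finset.sum_le_sum fun v _ => Finset.sum_le_sum fun w _ => key v w
      _ = ∑ v, ∑ w, (x v ^ 2 / z v) * (Q v w * z w) / 2
          + ∑ v, ∑ w, (x w ^ 2 / z w) * (Q v w * z v) / 2 := by
          rw [← Finset.sum_add_distrib]
          exact Finset.sum_congr rfl fun v _ => by rw [← Finset.sum_add_distrib]
      _ = ∑ v, ∑ w, (x v ^ 2 / z v) * (Q v w * z w) / 2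
          + ∑ w, ∑ v, (x w ^ 2 / z w) * (Q v w * z v) / 2 := by
          congr 1
          exact Finset.sum_comm
      _ = ∑ v, ∑ w, (x v ^ 2 / z v) * (Q v w * z w) / 2
          + ∑ w, ∑ v, (x w ^ 2 / z w) * (Q w v * z v) / 2 := by
          simp_rw [hsym]
      _ = ∑ v, (x v ^ 2 / z v) * (∑ w, Q v w * z w) := by
          rw [← Finset.sum_add_distrib]
          refine Finset.sum_congr rfl fun v _ => ?_
          rw [Finset.mul_sum]
          rw [← Finset.sum_add_distrib]
          exact Finset.sum_congr rfl fun w _ => by ring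
  obtain ⟨v0, hv0⟩ := Function.ne_iff.mp hx
  have step2 : ∑ v, (x v ^ 2 / z v) * (∑ w, Q v w * z w) < 0 := by
    have h0 : (0:ℝ) = ∑ _v : V, (0:ℝ) := by simp
    rw [h0]
    apply Finset.sum_lt_sum
    · intro i _
      exact mul_nonpos_of_nonneg_of_nonpos (div_nonneg (sq_nonneg _) (hz i).le) (hQz i).le
    · have hx2 : 0 < x v0 ^ 2 :=
        lt_of_le_of_ne (sq_nonneg _) (Ne.symm (pow_ne_zero 2 hv0))
      exact ⟨v0, Finset.mem_univ _,
        mul_neg_of_pos_of_neg (div_pos hx2 (hz v0)) (hQz v0)⟩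
  linarith

/-- Row sum of a tridiagonal pattern. -/
lemma tridiag_sum (N j : ℕ) (hj : j < N) (w : ℝ) (g : ℕ → ℝ) :
    ∑ k ∈ Finset.range N, (if j = k then w else if j + 1 = k ∨ k + 1 = j then 1 else 0) * g k
      = w * g j + (if j + 1 < N then g (j + 1) else 0) + (if 1 ≤ j then g (j - 1) else 0) := by
  have hpt : ∀ k, (if j = k then w else if j + 1 = k ∨ k + 1 = j then 1 else 0) * g k
      = (if k = j then w * g j else 0) + (if k = j + 1 then g (j + 1) else 0)
        + (if k = j - 1 then (if 1 ≤ j then g (j - 1) else 0) else 0) := by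
    intro k
    by_cases h1 : j = k
    · subst h1
      rw [if_pos rfl, if_pos rfl, if_neg (by omega)]
      by_cases h0 : j = 0
      · subst h0
        rw [if_pos (show (0:ℕ) = 0 - 1 by omega), if_neg (show ¬(1 ≤ 0) by omega)]
        ring
      · rw [if_neg (show ¬(j = j - 1) by omega)]
        ring
    · rw [if_neg h1, if_neg (show ¬(k = j) from fun hk => h1 hk.symm)]
      by_cases h2 : j + 1 = k
      · rw [if_pos (Or.inl h2), if_pos h2.symm,
          if_neg (show ¬(k = j - 1) by omega), h2]
        ring
      · by_cases h3 : k + 1 = j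
        · have hk : k = j - 1 := by omega
          rw [if_pos (Or.inr h3), if_neg (show ¬(k = j + 1) by omega), if_pos hk,
            if_pos (show 1 ≤ j by omega), hk]
          ring
        · rw [if_neg (show ¬(j + 1 = k ∨ k + 1 = j) by tauto),
            if_neg (show ¬(k = j + 1) by omega), if_neg (show ¬(k = j - 1) by omega)]
          ring
  simp_rw [hpt]
  rw [Finset.sum_add_distrib, Finset.sum_add_distrib,
    Finset.sum_ite_eq' (Finset.range N) j (fun _ => w * g j),
    Finset.sum_ite_eq' (Finset.range N) (j+1) (fun _ => g (j+1)),
    Finset.sum_ite_eq' (Finset.range N) (j-1) (fun _ => (if 1 ≤ j then g (j - 1) else 0))]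
  simp only [Finset.mem_range]
  rw [if_pos hj, if_pos (show j - 1 < N by omega)]

lemma tridiag_sum' (N j : ℕ) (hj : j < N) (w : ℝ) (g : ℕ → ℝ) :
    ∑ k ∈ Finset.range N, (if j = k then w * g k else if j + 1 = k ∨ k + 1 = j then g k else 0)
      = w * g j + (if j + 1 < N then g (j + 1) else 0) + (if 1 ≤ j then g (j - 1) else 0) := by
  rw [← tridiag_sum N j hj w g]
  apply Finset.sum_congr rfl
  intro k _
  split_ifs <;> ring

lemma sum_starVertex {n : Fin 3 → ℕ} (f : StarVertex 3 n → ℝ) :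
    ∑ v, f v = f none + ∑ i : Fin 3, ∑ j : Fin (n i), f (some ⟨i, j⟩) := by
  rw [Fintype.sum_option]
  congr 1
  rw [← Finset.univ_sigma_univ, Finset.sum_sigma]

lemma starMatrix_symm (m : ℕ) (n : Fin m → ℕ) (w0 : ℤ) (w : Fin m → ℕ → ℤ)
    (v v' : StarVertex m n) : starMatrix m n w0 w v v' = starMatrix m n w0 w v' v := by
  rcases v with _ | ⟨i, j⟩ <;> rcases v' with _ | ⟨i', j'⟩ <;>
    simp only [starMatrix, Matrix.of_apply]
  by_cases hi : (i : ℕ) = (i' : ℕ)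
  · obtain rfl : i = i' := Fin.ext hi
    rw [if_pos rfl, if_pos rfl]
    by_cases hj : (j : ℕ) = (j' : ℕ)
    · rw [if_pos hj, if_pos hj.symm, hj]
    · rw [if_neg hj, if_neg (show ¬((j':ℕ) = (j:ℕ)) from fun h => hj h.symm)]
      by_cases ho : (j:ℕ) + 1 = (j':ℕ) ∨ (j':ℕ) + 1 = (j:ℕ)
      · rw [if_pos ho, if_pos ho.symm]
      · rw [if_neg ho, if_neg (fun h => ho h.symm)]
  · rw [if_neg hi, if_neg (fun h => hi h.symm)]

lemma starMatrix_offdiag_nonneg (m : ℕ) (n : Fin m → ℕ) (w0 : ℤ) (w : Fin m → ℕ → ℤ)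
    (v v' : StarVertex m n) (hvv : v ≠ v') : 0 ≤ starMatrix m n w0 w v v' := by
  rcases v with _ | ⟨i, j⟩ <;> rcases v' with _ | ⟨i', j'⟩ <;>
    simp only [starMatrix, Matrix.of_apply]
  · exact absurd rfl hvv
  · split_ifs <;> norm_num
  · split_ifs <;> norm_num
  · by_cases hi : (i : ℕ) = (i' : ℕ)
    · obtain rfl : i = i' := Fin.ext hi
      by_cases hj : (j : ℕ) = (j' : ℕ)
      · obtain rfl : j = j' := Fin.ext hj
        exact absurd rfl hvv
      · rw [if_pos rfl, if_neg hj]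
        split_ifs <;> norm_num
    · rw [if_neg hi]

/-- The central weight vector entry. -/
noncomputable def zC (N : ℕ) : ℝ := ((N:ℝ) + 2) ^ 2

/-- The long-leg weight vector entries. -/
noncomputable def zLeg (N k : ℕ) : ℝ := ((k:ℝ) + (N:ℝ) + 3) * ((N:ℝ) + 1 - (k:ℝ))

/-- The positive vector used for `Λ_{p,q,r}`. -/
noncomputable def zStar (p q r : ℕ) : StarVertex 3 ![1, 1, q + r + p + 1] → ℝ
  | none => zC (q + r + p + 1)
  | some ⟨i, j⟩ =>
      if (i : ℕ) = 0 then (zC (q + r + p + 1) + 1) / ((p:ℝ) + 2)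
      else if (i : ℕ) = 1 then (zC (q + r + p + 1) + 1) / ((r:ℝ) + 3)
      else zLeg (q + r + p + 1) (j : ℕ)

/-- The weight function of the long leg. -/
def legW (p q r : ℕ) : ℕ → ℤ := fun j =>
  if j < q then -2 else if j = q then -3 else
    if j < q + r then -2 else if j = q + r then -3 else
    if j < q + r + p then -2 else -((q : ℤ) + 4)

lemma legW_le (p q r : ℕ) (k : ℕ) (hk : k < q + r + p) : legW p q r k ≤ -2 := by
  unfold legW; split_ifs <;> omega

lemma legW_last (p q r : ℕ) (hp : 1 ≤ p) (hr : 1 ≤ r) :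
    legW p q r (q + r + p) = -((q : ℤ) + 4) := by
  unfold legW; split_ifs <;> omega

/-- The intersection matrix of the star-shaped weighted tree `Λ_{p,q,r}` for `p, r ≥ 1`
(central vertex of weight `-2`; legs: a single vertex of weight `-(p+2)`; a single vertex of
weight `-(r+3)`; and a path with weights `-2` (`q` times), `-3`, `-2` (`r-1` times), `-3`,
`-2` (`p-1` times), `-(q+4)`) is negative definite. -/
theorem Lambda_pqr_negative_definite (p q r : ℕ) (hp : 1 ≤ p) (hr : 1 ≤ r) :
    ∀ x : StarVertex 3 ![1, 1, q + r + p + 1] → ℝ, x ≠ 0 →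
      ∑ v, ∑ v', ((starMatrix 3 ![1, 1, q + r + p + 1] (-2)
          ![fun _ => -((p : ℤ) + 2),
            fun _ => -((r : ℤ) + 3),
            fun j => if j < q then -2 else if j = q then -3 else
              if j < q + r then -2 else if j = q + r then -3 else
              if j < q + r + p then -2 else -((q : ℤ) + 4)] v v' : ℤ) : ℝ)
          * x v * x v' < 0 := by
  intro x hx
  set W : Fin 3 → ℕ → ℤ :=
    ![fun _ => -((p : ℤ) + 2), fun _ => -((r : ℤ) + 3), legW p q r] with hWdef
  have hW2 : (![fun _ => -((p : ℤ) + 2),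
            fun _ => -((r : ℤ) + 3),
            fun j => if j < q then -2 else if j = q then -3 else
              if j < q + r then -2 else if j = q + r then -3 else
              if j < q + r + p then -2 else -((q : ℤ) + 4)] : Fin 3 → ℕ → ℤ) = W := rfl
  rw [hW2]
  have hsym : ∀ v w : StarVertex 3 ![1, 1, q + r + p + 1],
      ((starMatrix 3 ![1, 1, q + r + p + 1] (-2) W v w : ℤ) : ℝ)
        = ((starMatrix 3 ![1, 1, q + r + p + 1] (-2) W w v : ℤ) : ℝ) := fun v w => by
    exact_mod_cast congrArg (fun t : ℤ => (t : ℝ)) (starMatrix_symm 3 _ (-2) W v w)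
  have hoff : ∀ v w : StarVertex 3 ![1, 1, q + r + p + 1], v ≠ w →
      (0:ℝ) ≤ ((starMatrix 3 ![1, 1, q + r + p + 1] (-2) W v w : ℤ) : ℝ) := fun v w hvw => by
    exact_mod_cast starMatrix_offdiag_nonneg 3 _ (-2) W v w hvw
  refine neg_def_of_pos_vector
    (fun v v' => ((starMatrix 3 ![1, 1, q + r + p + 1] (-2) W v v' : ℤ) : ℝ))
    hsym hoff
    (zStar p q r) ?_ ?_ x hx
  · -- positivity of z
    intro v
    rcases v with _ | ⟨i, j⟩
    · unfold zStar zC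
      positivity
    · simp only [zStar]
      split_ifs with h0 h1
      · unfold zC; positivity
      · unfold zC; positivity
      · have hi2 : (i : ℕ) = 2 := by omega
        obtain rfl : i = (2 : Fin 3) := Fin.ext hi2
        have hjlt : (j : ℕ) < q + r + p + 1 := j.isLt
        have hc : ((j:ℕ):ℝ) < ((q+r+p+1 : ℕ):ℝ) := by exact_mod_cast hjlt
        unfold zLeg
        have h2 : (0:ℝ) < ((q+r+p+1:ℕ):ℝ) + 1 - ((j:ℕ):ℝ) := by linarith
        have h1 : (0:ℝ) < ((j:ℕ):ℝ) + ((q+r+p+1:ℕ):ℝ) + 3 := by positivity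
        exact mul_pos h1 h2
  · -- row sums negative
    intro v
    rcases v with _ | ⟨i, j⟩
    · rw [sum_starVertex (fun w =>
        ((starMatrix 3 ![1, 1, q + r + p + 1] (-2) W none w : ℤ) : ℝ) * zStar p q r w),
        Fin.sum_univ_three]
      simp only [starMatrix, Matrix.of_apply, zStar]
      norm_num
      rw [Fin.sum_univ_eq_sum_range (fun k => if k = 0 then zLeg (q+r+p+1) k else 0)
        ((![1, 1, q + r + p + 1] : Fin 3 → ℕ) 2),
        show (![1, 1, q + r + p + 1] : Fin 3 → ℕ) 2 = q + r + p + 1 from rfl,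
        Finset.sum_ite_eq' (Finset.range (q+r+p+1)) 0 (zLeg (q+r+p+1)),
        if_pos (Finset.mem_range.mpr (by omega))]
      have hzleg0 : zLeg (q+r+p+1) 0 = zC (q+r+p+1) - 1 := by
        unfold zLeg zC; push_cast; ring
      have hposc : (0:ℝ) < zC (q+r+p+1) + 1 := by unfold zC; positivity
      have hp' : (1:ℝ) ≤ (p:ℝ) := by exact_mod_cast hp
      have hr' : (1:ℝ) ≤ (r:ℝ) := by exact_mod_cast hr
      have hdiv1 : (zC (q+r+p+1) + 1) / ((p:ℝ)+2) ≤ (zC (q+r+p+1) + 1) / 3 := by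
        apply div_le_div_of_nonneg_left hposc.le (by norm_num)
        linarith
      have hdiv2 : (zC (q+r+p+1) + 1) / ((r:ℝ)+3) ≤ (zC (q+r+p+1) + 1) / 4 := by
        apply div_le_div_of_nonneg_left hposc.le (by norm_num)
        linarith
      erw [Fin.sum_univ_one, Fin.sum_univ_one]
      norm_num
      linarith
    · obtain ⟨iv, hiv⟩ := i
      interval_cases iv
      · -- leg 0 row
        have hj0 : (j : ℕ) = 0 := Nat.lt_one_iff.mp j.isLt
        rw [sum_starVertex (fun w =>
          ((starMatrix 3 ![1, 1, q + r + p + 1] (-2) W (some ⟨⟨0, hiv⟩, j⟩) w : ℤ) : ℝ)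
            * zStar p q r w),
          Fin.sum_univ_three]
        simp only [starMatrix, Matrix.of_apply, zStar]
        norm_num [hj0]
        rw [show W 0 0 = -((p:ℤ)+2) from rfl]
        push_cast
        have hp2 : ((p:ℝ)+2) ≠ 0 := by positivity
        have hmul : ((p:ℝ)+2) * ((zC (q+r+p+1) + 1) / ((p:ℝ)+2)) = zC (q+r+p+1) + 1 :=
          mul_div_cancel₀ _ hp2
        erw [Fin.sum_univ_one]
        norm_num
        nlinarith [hmul]
      · -- leg 1 row
        have hj0 : (j : ℕ) = 0 := Nat.lt_one_iff.mp j.isLt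
        rw [sum_starVertex (fun w =>
          ((starMatrix 3 ![1, 1, q + r + p + 1] (-2) W (some ⟨⟨1, hiv⟩, j⟩) w : ℤ) : ℝ)
            * zStar p q r w),
          Fin.sum_univ_three]
        simp only [starMatrix, Matrix.of_apply, zStar]
        norm_num [hj0]
        rw [show W 1 0 = -((r:ℤ)+3) from rfl]
        push_cast
        have hr3 : ((r:ℝ)+3) ≠ 0 := by positivity
        have hmul : ((r:ℝ)+3) * ((zC (q+r+p+1) + 1) / ((r:ℝ)+3)) = zC (q+r+p+1) + 1 :=
          mul_div_cancel₀ _ hr3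
        erw [Fin.sum_univ_one]
        norm_num
        nlinarith [hmul]
      · -- long leg row
        rw [sum_starVertex (fun w =>
          ((starMatrix 3 ![1, 1, q + r + p + 1] (-2) W (some ⟨⟨2, hiv⟩, j⟩) w : ℤ) : ℝ)
            * zStar p q r w),
          Fin.sum_univ_three]
        simp only [starMatrix, Matrix.of_apply, zStar]
        norm_num
        rw [Fin.sum_univ_eq_sum_range
          (fun k => if (j:ℕ) = k then ((W ⟨2,hiv⟩ (j:ℕ) : ℤ):ℝ) * zLeg (q+r+p+1) k
            else if (j:ℕ) + 1 = k ∨ k + 1 = (j:ℕ) then zLeg (q+r+p+1) k else 0)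
          ((![1, 1, q + r + p + 1] : Fin 3 → ℕ) 2),
          show (![1, 1, q + r + p + 1] : Fin 3 → ℕ) 2 = q + r + p + 1 from rfl]
        have hk : (j:ℕ) < q + r + p + 1 := j.isLt
        rw [tridiag_sum' (q+r+p+1) (j:ℕ) hk _ (zLeg (q+r+p+1))]
        rw [show W ⟨2,hiv⟩ = legW p q r from rfl]
        set k := (j:ℕ) with hkdef
        clear_value k
        by_cases hlast : k = q + r + p
        · subst hlast
          rw [legW_last p q r hp hr,
            if_neg (show ¬(q+r+p = 0) by omega),
            if_neg (show ¬(q+r+p+1 < q+r+p+1) by omega),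
            if_pos (show 1 ≤ q+r+p by omega)]
          have e1 : zLeg (q+r+p+1) (q+r+p) = (2*((q:ℝ)+r+p)+4) * 2 := by
            unfold zLeg; push_cast; ring
          have e2 : zLeg (q+r+p+1) (q+r+p-1) = (2*((q:ℝ)+r+p)+3) * 3 := by
            unfold zLeg
            rw [Nat.cast_sub (show 1 ≤ q+r+p by omega)]
            push_cast; ring
          have hcast : ((-((q:ℤ)+4) : ℤ):ℝ) = -((q:ℝ)+4) := by push_cast; ring
          rw [e1, e2, hcast]
          have hq0 : (0:ℝ) ≤ (q:ℝ) := Nat.cast_nonneg q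
          have hr0 : (1:ℝ) ≤ (r:ℝ) := by exact_mod_cast hr
          have hp0 : (1:ℝ) ≤ (p:ℝ) := by exact_mod_cast hp
          nlinarith [mul_nonneg hq0 (show (0:ℝ) ≤ (q:ℝ)+r+p by linarith)]
        · have hklt : k < q + r + p := by omega
          have hW : ((legW p q r k : ℤ):ℝ) ≤ -2 := by
            exact_mod_cast legW_le p q r k hklt
          have hzpos : (0:ℝ) < zLeg (q+r+p+1) k := by
            unfold zLeg
            have h2 : (k:ℝ) < ((q+r+p+1:ℕ):ℝ) := by exact_mod_cast hk
            have h1 : (0:ℝ) < (k:ℝ) + ((q+r+p+1:ℕ):ℝ) + 3 := by positivity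
            exact mul_pos h1 (by linarith)
          have hWz : ((legW p q r k : ℤ):ℝ) * zLeg (q+r+p+1) k
              ≤ -2 * zLeg (q+r+p+1) k := mul_le_mul_of_nonneg_right hW hzpos.le
          rw [if_pos (show k+1 < q+r+p+1 by omega)]
          by_cases hk0 : k = 0
          · subst hk0
            rw [if_pos rfl, if_neg (by omega)]
            have e : zC (q+r+p+1) + (-2) * zLeg (q+r+p+1) 0 + zLeg (q+r+p+1) (0+1) = -2 := by
              unfold zC zLeg; push_cast; ring
            linarith
          · rw [if_neg hk0, if_pos (show 1 ≤ k by omega)]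
            have hcast1 : ((k-1:ℕ):ℝ) = (k:ℝ) - 1 := by
              rw [Nat.cast_sub (by omega)]; norm_num
            have e : (-2) * zLeg (q+r+p+1) k + zLeg (q+r+p+1) (k+1) + zLeg (q+r+p+1) (k-1)
                = -2 := by
              unfold zLeg
              rw [hcast1]
              push_cast; ring
            linarith
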